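/- Let W : ℝ^d → ℝ satisfy assumptions (A0)–(A2). Let (ρ_n) be a sequence in 𝒫₂(ℝ^d) converging narrowly to ρ (i.e. ∫ f dρ_n → ∫ f dρ for every bounded continuous f). Then for Lebesgue-almost every x ∈ ℝ^d, lim_{n→∞} ∫_{{y : y ≠ x}} ∇W(x − y) ρ_n(dy) = ∫_{{y : y ≠ x}} ∇W(x − y) ρ(dy). -/

import Mathlib

open MeasureTheory Filter Metric
open scoped RealInnerProductSpace Topology BigOperators NNReal ENNReal Classical

noncomputable section

/-- The extended gradient `∇̂W`: `∇W(x)` for `x ≠ 0` and `0` at the origin. -/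
def hatGrad (d : ℕ) (W : EuclideanSpace ℝ (Fin d) → ℝ) (x : EuclideanSpace ℝ (Fin d)) :
    EuclideanSpace ℝ (Fin d) :=
  if x = 0 then 0 else gradient W x

/-- Assumptions (A0)-(A2): `W` is Lipschitz with constant `winf ≥ 0`, even, `W 0 = 0`,
`lam`-convex for some `lam ≤ 0`, continuously differentiable away from the origin,
with gradient bounded by `winf` away from the origin. -/
structure PointyPotential (d : ℕ) (W : EuclideanSpace ℝ (Fin d) → ℝ) (winf lam : ℝ) : Prop where
  winf_nonneg : 0 ≤ winf
  lipschitz : LipschitzWith (Real.toNNReal winf) W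
  even : ∀ x, W (-x) = W x
  zero_val : W 0 = 0
  lam_nonpos : lam ≤ 0
  lamConvex : ConvexOn ℝ Set.univ fun x => W x - lam / 2 * ‖x‖ ^ 2
  diffAway : ∀ x : EuclideanSpace ℝ (Fin d), x ≠ 0 → DifferentiableAt ℝ W x
  gradContinuous : ContinuousOn (gradient W) {x : EuclideanSpace ℝ (Fin d) | x ≠ 0}
  gradBound : ∀ x : EuclideanSpace ℝ (Fin d), x ≠ 0 → ‖gradient W x‖ ≤ winf

section Aux

variable {d : ℕ} {W : EuclideanSpace ℝ (Fin d) → ℝ} {winf lam : ℝ}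

lemma hatGrad_norm_le (hW : PointyPotential d W winf lam) (z : EuclideanSpace ℝ (Fin d)) :
    ‖hatGrad d W z‖ ≤ winf := by
  by_cases hz : z = 0
  · simp [hatGrad, hz, hW.winf_nonneg]
  · simpa [hatGrad, hz] using hW.gradBound z hz

lemma hatGrad_continuousOn (hW : PointyPotential d W winf lam) :
    ContinuousOn (hatGrad d W) {z : EuclideanSpace ℝ (Fin d) | z ≠ 0} :=
  hW.gradContinuous.congr fun z hz => if_neg hz

lemma hatGrad_measurable (hW : PointyPotential d W winf lam) :
    Measurable (hatGrad d W) := by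
  apply measurable_of_continuousOn_compl_singleton (0 : EuclideanSpace ℝ (Fin d))
  rw [Set.compl_singleton_eq]
  exact hatGrad_continuousOn hW

lemma euclid_coord_le_norm {d : ℕ} (v : EuclideanSpace ℝ (Fin d)) (i : Fin d) :
    ‖(EuclideanSpace.proj i : EuclideanSpace ℝ (Fin d) →L[ℝ] ℝ) v‖ ≤ ‖v‖ := by
  have h0 : (EuclideanSpace.proj i : EuclideanSpace ℝ (Fin d) →L[ℝ] ℝ) v = v i := rfl
  rw [h0]
  calc ‖v i‖ = Real.sqrt (‖v i‖ ^ 2) := (Real.sqrt_sq (norm_nonneg _)).symm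
    _ ≤ Real.sqrt (∑ j, ‖v j‖ ^ 2) :=
        Real.sqrt_le_sqrt (Finset.single_le_sum (fun j _ => sq_nonneg ‖v j‖) (Finset.mem_univ i))
    _ = ‖v‖ := (EuclideanSpace.norm_eq v).symm

end Aux

/-- if `ρ_n ∈ 𝒫₂(ℝ^d)` converge narrowly to `ρ`, then for Lebesgue-a.e. `x`,
`∫_{y ≠ x} ∇W(x−y) ρ_n(dy) → ∫_{y ≠ x} ∇W(x−y) ρ(dy)`. -/
theorem velocity_stability_ae
    {d : ℕ} (W : EuclideanSpace ℝ (Fin d) → ℝ) (winf lam : ℝ)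
    (hW : PointyPotential d W winf lam)
    (ρn : ℕ → Measure (EuclideanSpace ℝ (Fin d)))
    (ρ : Measure (EuclideanSpace ℝ (Fin d)))
    (hρn : ∀ n, IsProbabilityMeasure (ρn n))
    (hρn2 : ∀ n, Integrable (fun x => ‖x‖ ^ 2) (ρn n))
    (hρ : IsProbabilityMeasure ρ) (hρ2 : Integrable (fun x => ‖x‖ ^ 2) ρ)
    (hnarrow : ∀ f : BoundedContinuousFunction (EuclideanSpace ℝ (Fin d)) ℝ,
      Tendsto (fun n => ∫ x, f x ∂(ρn n)) atTop (𝓝 (∫ x, f x ∂ρ))) :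
    ∀ᵐ x ∂(volume : Measure (EuclideanSpace ℝ (Fin d))),
      Tendsto
        (fun n => ∫ y in {y : EuclideanSpace ℝ (Fin d) | y ≠ x}, gradient W (x - y) ∂(ρn n))
        atTop
        (𝓝 (∫ y in {y : EuclideanSpace ℝ (Fin d) | y ≠ x}, gradient W (x - y) ∂ρ)) := by
  rcases Nat.eq_zero_or_pos d with hd | hd
  · -- degenerate case `d = 0`: the space is a single point, the domain of integration is empty
    subst hd
    haveI : Subsingleton (EuclideanSpace ℝ (Fin 0)) :=
      ⟨fun a b => by ext i; exact i.elim0⟩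
    refine Filter.Eventually.of_forall fun x => ?_
    have hset : {y : EuclideanSpace ℝ (Fin 0) | y ≠ x} = ∅ := by
      ext y
      simp [Subsingleton.elim y x]
    rw [hset]
    simpa using tendsto_const_nhds
  -- main case `d ≥ 1`
  haveI : Nontrivial (EuclideanSpace ℝ (Fin d)) := by
    refine nontrivial_of_ne (EuclideanSpace.single ⟨0, hd⟩ (1 : ℝ)) 0 fun h => ?_
    have h2 := congrArg norm h
    rw [EuclideanSpace.norm_single, norm_one, norm_zero] at h2
    exact one_ne_zero h2
  haveI : NullSingletonClass (volume : Measure (EuclideanSpace ℝ (Fin d))) := inferInstance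
  -- a.e. point is not an atom of ρ
  have hcnt : Set.Countable {z : EuclideanSpace ℝ (Fin d) | ρ {z} ≠ 0} := by
    have h := Measure.countable_meas_level_set_pos
      (μ := ρ) (g := (id : EuclideanSpace ℝ (Fin d) → EuclideanSpace ℝ (Fin d))) measurable_id
    simpa [Set.setOf_eq_eq_singleton, pos_iff_ne_zero] using h
  have hae : ∀ᵐ x ∂(volume : Measure (EuclideanSpace ℝ (Fin d))), ρ {x} = 0 := by
    rw [ae_iff]
    exact hcnt.measure_zero _
  filter_upwards [hae] with x hx
  -- fixed point x with ρ {x} = 0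
  set g : EuclideanSpace ℝ (Fin d) → EuclideanSpace ℝ (Fin d) :=
    fun y => hatGrad d W (x - y) with hg_def
  have hgmeas : Measurable g :=
    (hatGrad_measurable hW).comp (measurable_const.sub measurable_id)
  have hgbound : ∀ y, ‖g y‖ ≤ winf := fun y => hatGrad_norm_le hW _
  have hg_int : ∀ μ : Measure (EuclideanSpace ℝ (Fin d)), IsProbabilityMeasure μ →
      Integrable g μ := by
    intro μ hμ
    exact Integrable.mono' (integrable_const winf) hgmeas.aestronglyMeasurable
      (Eventually.of_forall hgbound)
  have hsm : MeasurableSet {y : EuclideanSpace ℝ (Fin d) | y ≠ x} := by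
    rw [← Set.compl_singleton_eq]
    exact (measurableSet_singleton x).compl
  have hscompl : {y : EuclideanSpace ℝ (Fin d) | y ≠ x}ᶜ = {x} := by
    ext y; simp
  -- rewrite the set integrals as full-space integrals of g
  have hrewrite : ∀ μ : Measure (EuclideanSpace ℝ (Fin d)), IsProbabilityMeasure μ →
      (∫ y in {y : EuclideanSpace ℝ (Fin d) | y ≠ x}, gradient W (x - y) ∂μ) = ∫ y, g y ∂μ := by
    intro μ hμ
    have h1 : (∫ y in {y : EuclideanSpace ℝ (Fin d) | y ≠ x}, gradient W (x - y) ∂μ)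
        = ∫ y in {y : EuclideanSpace ℝ (Fin d) | y ≠ x}, g y ∂μ := by
      refine setIntegral_congr_fun hsm fun y hy => ?_
      have hxy : x - y ≠ 0 := sub_ne_zero.mpr (Ne.symm hy)
      simp [hg_def, hatGrad, hxy]
    have h2 : (∫ y in ({x} : Set (EuclideanSpace ℝ (Fin d))), g y ∂μ) = 0 := by
      refine setIntegral_eq_zero_of_forall_eq_zero fun y hy => ?_
      rw [Set.mem_singleton_iff] at hy
      subst hy
      simp [hg_def, hatGrad]
    have h3 := integral_add_compl hsm (hg_int μ hμ)
    rw [h1, ← h3, hscompl, h2, add_zero]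
  have hrw_seq : (fun n => ∫ y in {y : EuclideanSpace ℝ (Fin d) | y ≠ x},
      gradient W (x - y) ∂(ρn n)) = fun n => ∫ y, g y ∂(ρn n) :=
    funext fun n => hrewrite _ (hρn n)
  rw [hrw_seq, hrewrite ρ hρ]
  -- main ε-argument
  rw [Metric.tendsto_atTop]
  intro ε hε
  have hw1 : (0 : ℝ) < 2 * winf + 2 := by linarith [hW.winf_nonneg]
  set δ : ℝ := ε / (2 * winf + 2) with hδ_def
  have hδ : 0 < δ := div_pos hε hw1
  have hδε : winf * δ + δ + winf * δ < ε := by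
    have hcδ : (2 * winf + 2) * δ = ε := by
      rw [hδ_def]; exact mul_div_cancel₀ ε hw1.ne'
    nlinarith [hδ, hW.winf_nonneg]
  -- choose a small closed ball around x with small ρ-measure
  have h1 : Tendsto (fun r => ρ (cthickening r {x})) (𝓝 0) (𝓝 (ρ {x})) :=
    tendsto_measure_cthickening_of_isClosed ⟨1, one_pos, measure_ne_top ρ _⟩ isClosed_singleton
  rw [hx] at h1
  have hδ' : (0 : ℝ≥0∞) < ENNReal.ofReal δ := ENNReal.ofReal_pos.mpr hδ
  have h2 : ∀ᶠ r in 𝓝[>] (0 : ℝ), ρ (cthickening r {x}) < ENNReal.ofReal δ :=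
    (h1.eventually (gt_mem_nhds hδ')).filter_mono nhdsWithin_le_nhds
  obtain ⟨r, hr_small, hr_pos⟩ := (h2.and self_mem_nhdsWithin).exists
  rw [cthickening_singleton x hr_pos.le] at hr_small
  set A : Set (EuclideanSpace ℝ (Fin d)) := closedBall x r with hA_def
  have hA_meas : MeasurableSet A := measurableSet_closedBall
  -- the cutoff function
  set φ : EuclideanSpace ℝ (Fin d) → ℝ := fun y => min 1 (dist y x / r) with hφ_def
  have hφcont : Continuous φ :=
    continuous_const.min ((continuous_id.dist continuous_const).div_const r)
  have hφ0 : ∀ y, 0 ≤ φ y := fun y =>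
    le_min zero_le_one (div_nonneg dist_nonneg hr_pos.le)
  have hφ1 : ∀ y, φ y ≤ 1 := fun y => min_le_left _ _
  have hφx : φ x = 0 := by simp [hφ_def]
  have hφout : ∀ y, y ∉ A → φ y = 1 := by
    intro y hy
    have hdist : r < dist y x := by
      by_contra hcon
      exact hy (mem_closedBall.mpr (not_lt.mp hcon))
    have : (1 : ℝ) ≤ dist y x / r := (le_div_iff₀ hr_pos).mpr (by linarith)
    simpa [hφ_def] using min_eq_left this
  set h : EuclideanSpace ℝ (Fin d) → EuclideanSpace ℝ (Fin d) := fun y => φ y • g y with hh_def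
  have hhbound : ∀ y, ‖h y‖ ≤ winf := by
    intro y
    rw [hh_def]
    calc ‖φ y • g y‖ = |φ y| * ‖g y‖ := by rw [norm_smul, Real.norm_eq_abs]
      _ ≤ 1 * winf := by
          apply mul_le_mul _ (hgbound y) (norm_nonneg _) zero_le_one
          rw [abs_of_nonneg (hφ0 y)]; exact hφ1 y
      _ = winf := one_mul winf
  have hhx : h x = 0 := by simp [hh_def, hφx]
  have hhcont : Continuous h := by
    rw [continuous_iff_continuousAt]
    intro y
    by_cases hy : y = x
    · subst hy
      rw [ContinuousAt, hhx]
      apply squeeze_zero_norm (a := fun z => winf * φ z)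
      · intro z
        rw [hh_def]
        calc ‖φ z • g z‖ = |φ z| * ‖g z‖ := by rw [norm_smul, Real.norm_eq_abs]
          _ ≤ φ z * winf := by
              rw [abs_of_nonneg (hφ0 z)]
              exact mul_le_mul_of_nonneg_left (hgbound z) (hφ0 z)
          _ = winf * φ z := mul_comm _ _
      · have hφt := (hφcont.tendsto y).const_mul winf
        rw [hφx, mul_zero] at hφt
        exact hφt
    · have hxy : x - y ≠ 0 := sub_ne_zero.mpr (Ne.symm hy)
      have hgA : ContinuousAt (hatGrad d W) (x - y) :=
        (hatGrad_continuousOn hW).continuousAt (isOpen_ne.mem_nhds hxy)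
      have hgC : ContinuousAt g y :=
        hgA.comp ((continuous_const.sub continuous_id).continuousAt)
      exact (hφcont.continuousAt).smul hgC
  have hh_int : ∀ μ : Measure (EuclideanSpace ℝ (Fin d)), IsProbabilityMeasure μ →
      Integrable h μ := by
    intro μ hμ
    exact Integrable.mono' (integrable_const winf) hhcont.aestronglyMeasurable
      (Eventually.of_forall hhbound)
  -- difference bound
  have hdiff : ∀ μ : Measure (EuclideanSpace ℝ (Fin d)), IsProbabilityMeasure μ →
      ‖(∫ y, g y ∂μ) - ∫ y, h y ∂μ‖ ≤ winf * (μ A).toReal := by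
    intro μ hμ
    rw [← integral_sub (hg_int μ hμ) (hh_int μ hμ)]
    have hpt : ∀ y, ‖g y - h y‖ ≤ A.indicator (fun _ => winf) y := by
      intro y
      have hgh : g y - h y = (1 - φ y) • g y := by
        rw [hh_def, sub_smul, one_smul]
      by_cases hyA : y ∈ A
      · rw [Set.indicator_of_mem hyA, hgh, norm_smul, Real.norm_eq_abs]
        calc |1 - φ y| * ‖g y‖ ≤ 1 * winf := by
              apply mul_le_mul _ (hgbound y) (norm_nonneg _) zero_le_one
              rw [abs_of_nonneg (by linarith [hφ1 y])]
              linarith [hφ0 y]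
          _ = winf := one_mul winf
      · rw [Set.indicator_of_notMem hyA, hgh, hφout y hyA]
        simp
    calc ‖∫ y, (g y - h y) ∂μ‖ ≤ ∫ y, ‖g y - h y‖ ∂μ := norm_integral_le_integral_norm _
      _ ≤ ∫ y, A.indicator (fun _ => winf) y ∂μ := by
          apply integral_mono ((hg_int μ hμ).sub (hh_int μ hμ)).norm
            ((integrable_const winf).indicator hA_meas) hpt
      _ = (μ A).toReal • winf := integral_indicator_const winf hA_meas
      _ = winf * (μ A).toReal := by rw [smul_eq_mul, mul_comm]
  -- convergence of the middle (continuous bounded) term, coordinatewise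
  have hcoord : ∀ i : Fin d,
      Tendsto (fun n => (EuclideanSpace.proj i : EuclideanSpace ℝ (Fin d) →L[ℝ] ℝ)
        (∫ y, h y ∂(ρn n))) atTop
        (𝓝 ((EuclideanSpace.proj i : EuclideanSpace ℝ (Fin d) →L[ℝ] ℝ) (∫ y, h y ∂ρ))) := by
    intro i
    set L : EuclideanSpace ℝ (Fin d) →L[ℝ] ℝ := EuclideanSpace.proj i with hL_def
    set F : BoundedContinuousFunction (EuclideanSpace ℝ (Fin d)) ℝ :=
      BoundedContinuousFunction.ofNormedAddCommGroup (fun y => L (h y))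
        (L.continuous.comp hhcont) winf
        (fun y => (euclid_coord_le_norm (h y) i).trans (hhbound y)) with hF_def
    have e1 : ∀ μ : Measure (EuclideanSpace ℝ (Fin d)), IsProbabilityMeasure μ →
        L (∫ y, h y ∂μ) = ∫ y, F y ∂μ := by
      intro μ hμ
      rw [← L.integral_comp_comm (hh_int μ hμ)]
      rfl
    have heq : (fun n => L (∫ y, h y ∂(ρn n))) = fun n => ∫ y, F y ∂(ρn n) :=
      funext fun n => e1 _ (hρn n)
    rw [heq, e1 ρ hρ]
    exact hnarrow F
  have hmid : Tendsto (fun n => ∫ y, h y ∂(ρn n)) atTop (𝓝 (∫ y, h y ∂ρ)) := by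
    have h2 : Tendsto (fun n => (EuclideanSpace.equiv (Fin d) ℝ) (∫ y, h y ∂(ρn n))) atTop
        (𝓝 ((EuclideanSpace.equiv (Fin d) ℝ) (∫ y, h y ∂ρ))) :=
      tendsto_pi_nhds.mpr fun i => hcoord i
    have h3 := (((EuclideanSpace.equiv (Fin d) ℝ).symm.continuous.tendsto _).comp h2)
    simpa [Function.comp_def] using h3
  -- portmanteau: limsup of measures of the closed ball
  set P : ProbabilityMeasure (EuclideanSpace ℝ (Fin d)) := ⟨ρ, hρ⟩ with hP_def
  set Pn : ℕ → ProbabilityMeasure (EuclideanSpace ℝ (Fin d)) := fun n => ⟨ρn n, hρn n⟩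
    with hPn_def
  have hPtend : Tendsto Pn atTop (𝓝 P) :=
    ProbabilityMeasure.tendsto_iff_forall_integral_tendsto.mpr hnarrow
  have hA_limsup : (atTop.limsup fun n => (Pn n : Measure (EuclideanSpace ℝ (Fin d))) A)
      ≤ (P : Measure (EuclideanSpace ℝ (Fin d))) A :=
    ProbabilityMeasure.limsup_measure_closed_le_of_tendsto hPtend isClosed_closedBall
  have hA_ev : ∀ᶠ n in atTop, ρn n A < ENNReal.ofReal δ := by
    have := eventually_lt_of_limsup_lt (lt_of_le_of_lt hA_limsup hr_small)
    exact this
  have hmid_ev : ∀ᶠ n in atTop, dist (∫ y, h y ∂(ρn n)) (∫ y, h y ∂ρ) < δ :=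
    (Metric.tendsto_nhds.mp hmid) δ hδ
  obtain ⟨N, hN⟩ := eventually_atTop.mp (hA_ev.and hmid_ev)
  refine ⟨N, fun n hn => ?_⟩
  obtain ⟨hAn, hmidn⟩ := hN n hn
  have hAn' : (ρn n A).toReal < δ := ENNReal.toReal_lt_of_lt_ofReal hAn
  have hAρ' : (ρ A).toReal < δ := ENNReal.toReal_lt_of_lt_ofReal hr_small
  have t1 : dist (∫ y, g y ∂(ρn n)) (∫ y, h y ∂(ρn n)) ≤ winf * δ := by
    rw [dist_eq_norm]
    exact (hdiff (ρn n) (hρn n)).trans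
      (mul_le_mul_of_nonneg_left hAn'.le hW.winf_nonneg)
  have t3 : dist (∫ y, h y ∂ρ) (∫ y, g y ∂ρ) ≤ winf * δ := by
    rw [dist_eq_norm, norm_sub_rev]
    exact (hdiff ρ hρ).trans (mul_le_mul_of_nonneg_left hAρ'.le hW.winf_nonneg)
  have htri := dist_triangle4 (∫ y, g y ∂(ρn n)) (∫ y, h y ∂(ρn n))
    (∫ y, h y ∂ρ) (∫ y, g y ∂ρ)
  linarith
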